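/- For every natural number n ≥ 0 and every real x, (2·√2/√(2π)) · ∫_ℝ fₙ(√2·x − y) · exp(−y²/2) dy = 2^{1−n/2} · fₙ(x), where fₙ denotes the n-th derivative of x ↦ exp(−x²/2). In other words, the signed measure with density fₙ is an eigenfunction of the linearization DTν = 2(ν ∗ χ) ∘ S_{1/√2} of the central limit operator at the standard Gaussian χ, with eigenvalue 2^{1−n/2}. -/

import Mathlib

open MeasureTheory Real

open Polynomial Filter Metric in
private lemma gauss_contDiff' : ContDiff ℝ (⊤ : ℕ∞) (fun x : ℝ => Real.exp (-(x ^ 2) / 2)) :=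
  (((contDiff_id.pow 2).neg).div_const 2).exp

/-- `gaussDeriv n` is the `n`-th derivative of `x ↦ exp (-x²/2)`; it equals
`e^{-x²/2} Hₙ(x)`, a multiple of a Hermite polynomial times the Gaussian. -/
noncomputable def gaussDeriv (n : ℕ) : ℝ → ℝ :=
  iteratedDeriv n (fun x : ℝ => Real.exp (-(x ^ 2) / 2))

section Aux
open Polynomial Filter Metric

private lemma gaussDeriv_contDiff (n : ℕ) : ContDiff ℝ (⊤ : ℕ∞) (gaussDeriv n) := by
  rw [gaussDeriv, iteratedDeriv_eq_iterate]
  exact gauss_contDiff'.iterate_deriv n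

private lemma gaussDeriv_continuous (n : ℕ) : Continuous (gaussDeriv n) :=
  (gaussDeriv_contDiff n).continuous

private lemma gaussDeriv_hasDerivAt (n : ℕ) (u : ℝ) :
    HasDerivAt (gaussDeriv n) (gaussDeriv (n + 1) u) u := by
  have hd : DifferentiableAt ℝ (gaussDeriv n) u :=
    ((gaussDeriv_contDiff n).differentiable (by simp)) u
  have : gaussDeriv (n + 1) u = deriv (gaussDeriv n) u := by
    rw [gaussDeriv, gaussDeriv, iteratedDeriv_succ]
  rw [this]
  exact hd.hasDerivAt

private lemma gaussDeriv_eq_hermite (n : ℕ) (x : ℝ) :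
    gaussDeriv n x = (-1 : ℝ) ^ n * aeval x (hermite n) * Real.exp (-(x ^ 2) / 2) := by
  have := Polynomial.deriv_gaussian_eq_hermite_mul_gaussian n x
  rw [gaussDeriv, iteratedDeriv_eq_iterate]
  simp only [neg_div] at this ⊢
  exact this

private lemma tendsto_poly_gauss_atTop (P : ℝ[X]) :
    Tendsto (fun u : ℝ => P.eval u * Real.exp (-(u ^ 2) / 2)) atTop (nhds 0) := by
  have h0 : Tendsto (fun u : ℝ => P.eval u / Real.exp u) atTop (nhds 0) :=
    P.tendsto_div_exp_atTop
  apply squeeze_zero_norm' (a := fun u => |P.eval u / Real.exp u|)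
  · filter_upwards [eventually_ge_atTop (2 : ℝ)] with u hu
    have h1 : u ≤ u ^ 2 / 2 := by nlinarith
    have h2 : Real.exp (-(u ^ 2) / 2) ≤ Real.exp (-u) := by
      apply Real.exp_le_exp.2; linarith
    rw [Real.norm_eq_abs, abs_mul, abs_div, abs_of_pos (Real.exp_pos u),
      abs_of_pos (Real.exp_pos _), Real.exp_neg] at *
    calc |P.eval u| * Real.exp (-(u ^ 2) / 2) ≤ |P.eval u| * (Real.exp u)⁻¹ := by
          exact mul_le_mul_of_nonneg_left h2 (abs_nonneg _)
      _ = |P.eval u| / Real.exp u := by rw [div_eq_mul_inv]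
  · simpa using h0.abs

private lemma tendsto_poly_gauss_atBot (P : ℝ[X]) :
    Tendsto (fun u : ℝ => P.eval u * Real.exp (-(u ^ 2) / 2)) atBot (nhds 0) := by
  have h := (tendsto_poly_gauss_atTop (P.comp (-X))).comp tendsto_neg_atBot_atTop
  convert h using 2 with u
  simp [Function.comp, eval_comp]

private lemma poly_gauss_bounded (P : ℝ[X]) :
    ∃ C : ℝ, ∀ u : ℝ, |P.eval u * Real.exp (-(u ^ 2) / 2)| ≤ C := by
  have hcont : Continuous (fun u : ℝ => P.eval u * Real.exp (-(u ^ 2) / 2)) :=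
    P.continuous.mul (Real.continuous_exp.comp (by fun_prop))
  have hz : Tendsto (fun u : ℝ => P.eval u * Real.exp (-(u ^ 2) / 2)) (cocompact ℝ) (nhds 0) := by
    rw [cocompact_eq_atBot_atTop]
    exact Tendsto.sup (tendsto_poly_gauss_atBot P) (tendsto_poly_gauss_atTop P)
  let f : ZeroAtInftyContinuousMap ℝ ℝ :=
    { toFun := fun u => P.eval u * Real.exp (-(u ^ 2) / 2)
      continuous_toFun := hcont
      zero_at_infty' := hz }
  refine ⟨‖f.toBCF‖, fun u => ?_⟩
  have h := f.toBCF.norm_coe_le_norm u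
  rw [Real.norm_eq_abs] at h
  exact h

private lemma gaussDeriv_bounded (n : ℕ) : ∃ C : ℝ, ∀ u : ℝ, |gaussDeriv n u| ≤ C := by
  obtain ⟨C, hC⟩ := poly_gauss_bounded ((hermite n).map (algebraMap ℤ ℝ))
  refine ⟨C, fun u => ?_⟩
  rw [gaussDeriv_eq_hermite, mul_assoc, abs_mul, abs_pow, abs_neg, abs_one, one_pow, one_mul]
  have : (aeval u (hermite n) : ℝ) = eval u ((hermite n).map (algebraMap ℤ ℝ)) := by
    rw [aeval_def, eval₂_eq_eval_map]
  rw [this]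
  exact hC u

private lemma gauss_integrable : Integrable (fun y : ℝ => Real.exp (-(y ^ 2) / 2)) := by
  have : ∀ y : ℝ, -(y ^ 2) / 2 = -2⁻¹ * y ^ 2 := by intro y; ring
  simp_rw [this]
  exact integrable_exp_neg_mul_sq (b := 2⁻¹) (by norm_num)

private lemma conv_integrable (n : ℕ) (x : ℝ) :
    Integrable (fun y : ℝ => gaussDeriv n (Real.sqrt 2 * x - y) * Real.exp (-(y ^ 2) / 2)) := by
  obtain ⟨C, hC⟩ := gaussDeriv_bounded n
  have hcont : Continuous (gaussDeriv n) := gaussDeriv_continuous n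
  apply Integrable.mono' (gauss_integrable.const_mul C)
  · exact ((hcont.comp (by fun_prop)).mul (by fun_prop)).aestronglyMeasurable
  · filter_upwards with y
    rw [Real.norm_eq_abs, abs_mul, abs_of_pos (Real.exp_pos _)]
    exact mul_le_mul_of_nonneg_right (hC _) (Real.exp_pos _).le

private lemma cont_aux (m : ℕ) (c : ℝ) (x : ℝ) :
    Continuous (fun y : ℝ => gaussDeriv m (Real.sqrt 2 * x - y) * c * Real.exp (-(y ^ 2) / 2)) :=
  (((gaussDeriv_continuous m).comp
      ((continuous_const : Continuous fun _ : ℝ => Real.sqrt 2 * x).sub continuous_id)).mul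
    continuous_const).mul (Real.continuous_exp.comp (by fun_prop))

private lemma gaussDeriv_conv_key (n : ℕ) : ∀ x : ℝ,
    (∫ y : ℝ, gaussDeriv n (Real.sqrt 2 * x - y) * Real.exp (-(y ^ 2) / 2))
      = Real.sqrt π * ((Real.sqrt 2)⁻¹) ^ n * gaussDeriv n x := by
  induction n with
  | zero =>
    intro x
    have hs : (Real.sqrt 2) ≠ 0 := by positivity
    have h2 : Real.sqrt 2 ^ 2 = 2 := Real.sq_sqrt (by norm_num)
    have hint : ∀ y : ℝ,
        gaussDeriv 0 (Real.sqrt 2 * x - y) * Real.exp (-(y ^ 2) / 2)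
          = Real.exp (-(x ^ 2) / 2) * Real.exp (-((y - x / Real.sqrt 2) ^ 2)) := by
      intro y
      simp only [gaussDeriv, iteratedDeriv_zero]
      rw [← Real.exp_add, ← Real.exp_add]
      congr 1
      field_simp
      ring_nf
      have h3 : Real.sqrt 2 ^ 3 = 2 * Real.sqrt 2 := by rw [pow_succ, h2]
      have h4 : Real.sqrt 2 ^ 4 = 4 := by
        rw [show (4 : ℕ) = 2 * 2 from rfl, pow_mul, h2]; norm_num
      rw [h3, h4, h2]
      ring
    simp_rw [hint]
    rw [MeasureTheory.integral_const_mul]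
    have := MeasureTheory.integral_sub_right_eq_self (μ := volume)
      (fun u : ℝ => Real.exp (-(u ^ 2))) (x / Real.sqrt 2)
    rw [this]
    have hg : (∫ u : ℝ, Real.exp (-(u ^ 2))) = Real.sqrt π := by
      have : ∀ u : ℝ, -(u ^ 2) = -1 * u ^ 2 := fun u => by ring
      simp_rw [this, integral_gaussian, div_one]
    rw [hg]
    simp [gaussDeriv, iteratedDeriv_zero]
    ring
  | succ n ih =>
    intro x₀
    obtain ⟨C, hC⟩ := gaussDeriv_bounded (n + 1)
    have hC0 : 0 ≤ C := le_trans (abs_nonneg _) (hC 0)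
    have hder := hasDerivAt_integral_of_dominated_loc_of_deriv_le
      (F := fun x y => gaussDeriv n (Real.sqrt 2 * x - y) * Real.exp (-(y ^ 2) / 2))
      (F' := fun x y => gaussDeriv (n + 1) (Real.sqrt 2 * x - y) * Real.sqrt 2
          * Real.exp (-(y ^ 2) / 2))
      (x₀ := x₀) (s := Metric.ball x₀ 1) (bound := fun y => C * Real.sqrt 2 * Real.exp (-(y ^ 2) / 2))
      (Metric.ball_mem_nhds x₀ one_pos)
      (Eventually.of_forall fun x => by
        have h := cont_aux n 1 x
        simp only [mul_one] at h
        exact h.aestronglyMeasurable)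
      (conv_integrable n x₀)
      ((cont_aux (n + 1) (Real.sqrt 2) x₀).aestronglyMeasurable)
      (Eventually.of_forall fun y => fun x _ => by
        rw [Real.norm_eq_abs, abs_mul, abs_mul, abs_of_pos (Real.exp_pos _),
          abs_of_nonneg (Real.sqrt_nonneg 2)]
        exact mul_le_mul_of_nonneg_right
          (mul_le_mul_of_nonneg_right (hC _) (Real.sqrt_nonneg 2)) (Real.exp_pos _).le)
      ((gauss_integrable.const_mul (C * Real.sqrt 2)).congr (by
        filter_upwards with y; ring))
      (Eventually.of_forall fun y => fun x _ => by
        have h1 : HasDerivAt (fun x : ℝ => Real.sqrt 2 * x - y) (Real.sqrt 2) x := by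
          simpa using ((hasDerivAt_id x).const_mul (Real.sqrt 2)).sub_const y
        exact ((gaussDeriv_hasDerivAt n _).comp x h1).mul_const _)
    obtain ⟨-, hder⟩ := hder
    have h2 : HasDerivAt
        (fun x : ℝ => ∫ y : ℝ, gaussDeriv n (Real.sqrt 2 * x - y) * Real.exp (-(y ^ 2) / 2))
        (Real.sqrt π * ((Real.sqrt 2)⁻¹) ^ n * gaussDeriv (n + 1) x₀) x₀ := by
      have := (gaussDeriv_hasDerivAt n x₀).const_mul (Real.sqrt π * ((Real.sqrt 2)⁻¹) ^ n)
      have hfun : (fun x : ℝ => Real.sqrt π * ((Real.sqrt 2)⁻¹) ^ n * gaussDeriv n x)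
          = fun x : ℝ => ∫ y : ℝ, gaussDeriv n (Real.sqrt 2 * x - y) * Real.exp (-(y ^ 2) / 2) :=
        funext fun x => (ih x).symm
      rwa [hfun] at this
    have huniq := h2.unique hder
    have hsplit : (∫ y : ℝ, gaussDeriv (n + 1) (Real.sqrt 2 * x₀ - y) * Real.sqrt 2
          * Real.exp (-(y ^ 2) / 2))
        = Real.sqrt 2 * ∫ y : ℝ, gaussDeriv (n + 1) (Real.sqrt 2 * x₀ - y)
          * Real.exp (-(y ^ 2) / 2) := by
      rw [← MeasureTheory.integral_const_mul]
      congr 1; funext y; ring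
    rw [hsplit] at huniq
    have hs : (Real.sqrt 2) ≠ 0 := by positivity
    rw [pow_succ]
    field_simp at huniq ⊢
    linarith [huniq]

end Aux

/-- The density `fₙ` of the signed measure `νₙ = fₙ dx` is an eigenfunction of the
linearization `DT ν = 2 (ν ∗ χ) ∘ S_{1/√2}` of the central limit operator at the
standard Gaussian `χ`, with eigenvalue `2^{1 - n/2}`:
`(2√2/√(2π)) ∫ fₙ(√2·x − y) e^{−y²/2} dy = 2^{1−n/2} fₙ(x)`. -/
theorem gaussDeriv_eigenfunction (n : ℕ) (x : ℝ) :
    (2 * Real.sqrt 2 / Real.sqrt (2 * Real.pi)) *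
      ∫ y : ℝ, gaussDeriv n (Real.sqrt 2 * x - y) * Real.exp (-(y ^ 2) / 2) =
    (2 : ℝ) ^ ((1 : ℝ) - (n : ℝ) / 2) * gaussDeriv n x := by
  rw [gaussDeriv_conv_key n x]
  have hpow : ((Real.sqrt 2)⁻¹) ^ n = (2 : ℝ) ^ (-(n : ℝ) / 2) := by
    rw [Real.sqrt_eq_rpow, ← Real.rpow_neg_one ((2 : ℝ) ^ ((1 : ℝ) / 2)),
      ← Real.rpow_natCast (((2 : ℝ) ^ ((1 : ℝ) / 2)) ^ (-1 : ℝ)) n,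
      ← Real.rpow_mul (by positivity), ← Real.rpow_mul (by norm_num)]
    congr 1
    ring
  have h1 : (2 : ℝ) ^ ((1 : ℝ) - (n : ℝ) / 2) = 2 * (2 : ℝ) ^ (-(n : ℝ) / 2) := by
    rw [show (1 : ℝ) - (n : ℝ) / 2 = 1 + -(n : ℝ) / 2 by ring,
      Real.rpow_add (by norm_num), Real.rpow_one]
  have hsqrt2pi : Real.sqrt (2 * π) = Real.sqrt 2 * Real.sqrt π :=
    Real.sqrt_mul (by norm_num) π
  have hs2 : (Real.sqrt 2) ≠ 0 := by positivity
  have hsp : (Real.sqrt π) ≠ 0 := by positivity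
  rw [hpow, h1, hsqrt2pi]
  field_simp
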